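/- arXiv:2411.15054 — 2 statements merged into one kernel-verified Lean document; each statement's English description precedes it below -/
import Mathlib

section
/- Let a > 0 and let ψ: [−a,a] → ℝ be twice continuously differentiable with ψ(±a) = 0, ψ ≥ 0, ∫_{−a}^{a} ψ = 1, and suppose ψ'' + (α − Q)ψ = 0 on (−a,a) where Q is continuous with |Q| ≤ M and α ∈ ℝ. Then for each integer r ≥ 1, |∫_{−a}^{a} ψ(y) cos(2rπy) dy| ≤ min(1, (M + |α|)/(2r²π²)). -/
open MeasureTheory Real Filter Topology
open scoped Real

theorem stmt8 (a : ℝ) (ha : 0 < a) (psi Q : ℝ → ℝ) (M alpha : ℝ)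
    (hpsi : ContDiffOn ℝ 2 psi (Set.Icc (-a) a))
    (hbda : psi (-a) = 0) (hbdb : psi a = 0)
    (hpos : ∀ x ∈ Set.Icc (-a) a, 0 ≤ psi x)
    (hnorm : ∫ y in (-a)..a, psi y = 1)
    (hQ : ContinuousOn Q (Set.Icc (-a) a))
    (hQbd : ∀ x ∈ Set.Icc (-a) a, |Q x| ≤ M)
    (hODE : ∀ x ∈ Set.Ioo (-a) a,
      derivWithin (derivWithin psi (Set.Icc (-a) a)) (Set.Icc (-a) a) x =
        (Q x - alpha) * psi x) :
    ∀ r : ℕ, 1 ≤ r →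
      |∫ y in (-a)..a, psi y * Real.cos (2*(r:ℝ)*π*y)| ≤
        min 1 ((M + |alpha|) / (2*(r:ℝ)^2*π^2)) := by
  intro r hr
  have hle : (-a) ≤ a := by linarith
  have hπ := Real.pi_pos
  have hr1 : (1:ℝ) ≤ (r:ℝ) := by exact_mod_cast hr
  have hrpos : (0:ℝ) < (r:ℝ) := by linarith
  set k : ℝ := 2*(r:ℝ)*π with hk
  have hkpos : 0 < k := by rw [hk]; positivity
  set s := Set.Icc (-a) a with hs
  have hu : UniqueDiffOn ℝ s := uniqueDiffOn_Icc (by linarith)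
  have huIcc : Set.uIcc (-a) a = s := Set.uIcc_of_le hle
  set ψ' := derivWithin psi s with hψ'
  set ψ'' := derivWithin ψ' s with hψ''
  have hψcont : ContinuousOn psi s := hpsi.continuousOn
  have hψ'C1 : ContDiffOn ℝ 1 ψ' s := hpsi.derivWithin hu (by norm_num)
  have hψ'cont : ContinuousOn ψ' s := hψ'C1.continuousOn
  have hψ''cont : ContinuousOn ψ'' s := hψ'C1.continuousOn_derivWithin hu le_rfl
  -- derivatives at interior points
  have hd1 : ∀ x ∈ Set.Ioo (-a) a, HasDerivAt psi (ψ' x) x := by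
    intro x hx
    have hmem : s ∈ 𝓝 x := Icc_mem_nhds hx.1 hx.2
    have hdw : DifferentiableWithinAt ℝ psi s x :=
      (hpsi.differentiableOn (by norm_num)) x (Set.Ioo_subset_Icc_self hx)
    have hda : DifferentiableAt ℝ psi x := hdw.differentiableAt hmem
    have : ψ' x = deriv psi x := by rw [hψ']; exact derivWithin_of_mem_nhds hmem
    rw [this]; exact hda.hasDerivAt
  have hd2 : ∀ x ∈ Set.Ioo (-a) a, HasDerivAt ψ' (ψ'' x) x := by
    intro x hx
    have hmem : s ∈ 𝓝 x := Icc_mem_nhds hx.1 hx.2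
    have hdw : DifferentiableWithinAt ℝ ψ' s x :=
      (hψ'C1.differentiableOn (by norm_num)) x (Set.Ioo_subset_Icc_self hx)
    have hda : DifferentiableAt ℝ ψ' x := hdw.differentiableAt hmem
    have : ψ'' x = deriv ψ' x := by rw [hψ'']; exact derivWithin_of_mem_nhds hmem
    rw [this]; exact hda.hasDerivAt
  -- integrability
  have hint0 : IntervalIntegrable (fun y => psi y * Real.cos (k*y)) volume (-a) a := by
    apply ContinuousOn.intervalIntegrable
    rw [huIcc]
    exact hψcont.mul (Real.continuous_cos.comp (continuous_const.mul continuous_id)).continuousOn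
  have hint1 : IntervalIntegrable (fun y => ψ' y * Real.sin (k*y)) volume (-a) a := by
    apply ContinuousOn.intervalIntegrable
    rw [huIcc]
    exact hψ'cont.mul (Real.continuous_sin.comp (continuous_const.mul continuous_id)).continuousOn
  have hint2 : IntervalIntegrable (fun y => ψ'' y * Real.cos (k*y)) volume (-a) a := by
    apply ContinuousOn.intervalIntegrable
    rw [huIcc]
    exact hψ''cont.mul (Real.continuous_cos.comp (continuous_const.mul continuous_id)).continuousOn
  have hint3 : IntervalIntegrable ψ'' volume (-a) a := by
    apply ContinuousOn.intervalIntegrable; rw [huIcc]; exact hψ''cont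
  have hintψ : IntervalIntegrable psi volume (-a) a := by
    apply ContinuousOn.intervalIntegrable; rw [huIcc]; exact hψcont
  set I0 := ∫ y in (-a)..a, psi y * Real.cos (k*y) with hI0
  set I1 := ∫ y in (-a)..a, ψ' y * Real.sin (k*y) with hI1
  set I2 := ∫ y in (-a)..a, ψ'' y * Real.cos (k*y) with hI2
  set I3 := ∫ y in (-a)..a, ψ'' y with hI3
  -- FTC 1 : ∫ (ψ' sin(ky) + ψ (cos(ky)*k)) = 0
  have E1 : I1 + k * I0 = 0 := by
    have hftc : (∫ y in (-a)..a,
        (ψ' y * Real.sin (k*y) + psi y * (Real.cos (k*y) * k)))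
        = psi a * Real.sin (k*a) - psi (-a) * Real.sin (k*(-a)) := by
      apply intervalIntegral.integral_eq_sub_of_hasDeriv_right_of_le hle
      · exact (hψcont.mul
          (Real.continuous_sin.comp (continuous_const.mul continuous_id)).continuousOn)
      · intro x hx
        have hlin : HasDerivAt (fun y : ℝ => k*y) k x := by
          simpa using (hasDerivAt_id x).const_mul k
        have hsin : HasDerivAt (fun y => Real.sin (k*y)) (Real.cos (k*x) * k) x :=
          (Real.hasDerivAt_sin (k*x)).comp x hlin
        exact ((hd1 x hx).mul hsin).hasDerivWithinAt
      · apply ContinuousOn.intervalIntegrable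
        rw [huIcc]
        exact (hψ'cont.mul
            (Real.continuous_sin.comp (continuous_const.mul continuous_id)).continuousOn).add
          (hψcont.mul (((Real.continuous_cos.comp
            (continuous_const.mul continuous_id)).mul continuous_const)).continuousOn)
    rw [hbda, hbdb] at hftc
    have hsplit : (∫ y in (-a)..a,
        (ψ' y * Real.sin (k*y) + psi y * (Real.cos (k*y) * k))) = I1 + k * I0 := by
      rw [intervalIntegral.integral_add hint1]
      · congr 1
        rw [hI0, ← intervalIntegral.integral_const_mul]
        apply intervalIntegral.integral_congr
        intro y _; ring
      · apply ContinuousOn.intervalIntegrable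
        rw [huIcc]
        exact hψcont.mul (((Real.continuous_cos.comp
          (continuous_const.mul continuous_id)).mul continuous_const)).continuousOn
    rw [hsplit] at hftc
    simpa using hftc
  -- FTC 2 : ∫ (ψ'' cos(ky) - ψ' sin(ky) k) = ψ'(a)cos(ka) - ψ'(-a)cos(-ka)
  have E2 : I2 - k * I1 = Real.cos (k*a) * (ψ' a - ψ' (-a)) := by
    have hftc : (∫ y in (-a)..a,
        (ψ'' y * Real.cos (k*y) + ψ' y * (-Real.sin (k*y) * k)))
        = ψ' a * Real.cos (k*a) - ψ' (-a) * Real.cos (k*(-a)) := by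
      apply intervalIntegral.integral_eq_sub_of_hasDeriv_right_of_le hle
      · exact (hψ'cont.mul
          (Real.continuous_cos.comp (continuous_const.mul continuous_id)).continuousOn)
      · intro x hx
        have hlin : HasDerivAt (fun y : ℝ => k*y) k x := by
          simpa using (hasDerivAt_id x).const_mul k
        have hcos : HasDerivAt (fun y => Real.cos (k*y)) (-Real.sin (k*x) * k) x :=
          (Real.hasDerivAt_cos (k*x)).comp x hlin
        exact ((hd2 x hx).mul hcos).hasDerivWithinAt
      · apply ContinuousOn.intervalIntegrable
        rw [huIcc]
        exact (hψ''cont.mul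
            (Real.continuous_cos.comp (continuous_const.mul continuous_id)).continuousOn).add
          (hψ'cont.mul ((((Real.continuous_sin.comp
            (continuous_const.mul continuous_id)).neg).mul continuous_const)).continuousOn)
    have hsplit : (∫ y in (-a)..a,
        (ψ'' y * Real.cos (k*y) + ψ' y * (-Real.sin (k*y) * k))) = I2 - k * I1 := by
      rw [intervalIntegral.integral_add hint2]
      · congr 1
        rw [hI1, ← intervalIntegral.integral_const_mul, ← intervalIntegral.integral_neg]
        apply intervalIntegral.integral_congr
        intro y _; ring
      · apply ContinuousOn.intervalIntegrable
        rw [huIcc]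
        exact hψ'cont.mul ((((Real.continuous_sin.comp
          (continuous_const.mul continuous_id)).neg).mul continuous_const)).continuousOn
    rw [hsplit] at hftc
    have hcosneg : Real.cos (k*(-a)) = Real.cos (k*a) := by
      rw [show k*(-a) = -(k*a) by ring, Real.cos_neg]
    rw [hcosneg] at hftc
    rw [hftc]; ring
  -- FTC 3 : ∫ ψ'' = ψ'(a) - ψ'(-a)
  have E3 : I3 = ψ' a - ψ' (-a) := by
    apply intervalIntegral.integral_eq_sub_of_hasDeriv_right_of_le hle hψ'cont
    · intro x hx; exact (hd2 x hx).hasDerivWithinAt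
    · exact hint3
  -- replace ψ'' via the ODE (a.e.)
  have hne : ∀ᵐ x : ℝ ∂(volume : Measure ℝ), x ≠ a := by
    have h0 : (volume : Measure ℝ) {a} = 0 := measure_singleton a
    rw [← compl_mem_ae_iff] at h0
    filter_upwards [h0] with x hx
    simpa using hx
  have haemem : ∀ᵐ x : ℝ ∂(volume : Measure ℝ),
      x ∈ Set.uIoc (-a) a → x ∈ Set.Ioo (-a) a := by
    filter_upwards [hne] with x hx hmem
    rw [Set.uIoc_of_le hle] at hmem
    exact ⟨hmem.1, lt_of_le_of_ne hmem.2 hx⟩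
  have hI2eq : I2 = ∫ y in (-a)..a, (Q y - alpha) * psi y * Real.cos (k*y) := by
    apply intervalIntegral.integral_congr_ae
    filter_upwards [haemem] with x hx hmem
    rw [show ψ'' x = (Q x - alpha) * psi x from hODE x (hx hmem)]
  have hI3eq : I3 = ∫ y in (-a)..a, (Q y - alpha) * psi y := by
    apply intervalIntegral.integral_congr_ae
    filter_upwards [haemem] with x hx hmem
    exact hODE x (hx hmem)
  -- constants
  have hM0 : 0 ≤ M := le_trans (abs_nonneg _) (hQbd 0 ⟨by linarith, by linarith⟩)
  have hC0 : 0 ≤ M + |alpha| := by have := abs_nonneg alpha; linarith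
  have hintCψ : IntervalIntegrable (fun y => (M + |alpha|) * psi y) volume (-a) a :=
    hintψ.const_mul _
  have hintCψ' : (∫ y in (-a)..a, (M + |alpha|) * psi y) = M + |alpha| := by
    rw [intervalIntegral.integral_const_mul, hnorm, mul_one]
  have hQabs : ∀ x ∈ s, |Q x - alpha| ≤ M + |alpha| := by
    intro x hx
    calc |Q x - alpha| ≤ |Q x| + |alpha| := abs_sub _ _
      _ ≤ M + |alpha| := by have := hQbd x hx; linarith
  -- bound |I2| ≤ M + |alpha|
  have hb2 : |I2| ≤ M + |alpha| := by
    rw [hI2eq]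
    calc |∫ y in (-a)..a, (Q y - alpha) * psi y * Real.cos (k*y)|
        ≤ ∫ y in (-a)..a, |(Q y - alpha) * psi y * Real.cos (k*y)| :=
          intervalIntegral.abs_integral_le_integral_abs hle
      _ ≤ ∫ y in (-a)..a, (M + |alpha|) * psi y := by
          apply intervalIntegral.integral_mono_on hle _ hintCψ
          · intro x hx
            rw [abs_mul, abs_mul, abs_of_nonneg (hpos x hx)]
            calc |Q x - alpha| * psi x * |Real.cos (k*x)|
                ≤ (M + |alpha|) * psi x * 1 :=
                  mul_le_mul (mul_le_mul_of_nonneg_right (hQabs x hx) (hpos x hx))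
                    (Real.abs_cos_le_one _) (abs_nonneg _)
                    (mul_nonneg hC0 (hpos x hx))
              _ = (M + |alpha|) * psi x := mul_one _
          · apply IntervalIntegrable.abs
            apply ContinuousOn.intervalIntegrable
            rw [huIcc]
            exact ((hQ.sub continuousOn_const).mul hψcont).mul
              (Real.continuous_cos.comp (continuous_const.mul continuous_id)).continuousOn
      _ = M + |alpha| := hintCψ'
  -- bound |I3| ≤ M + |alpha|
  have hb3 : |I3| ≤ M + |alpha| := by
    rw [hI3eq]
    calc |∫ y in (-a)..a, (Q y - alpha) * psi y|
        ≤ ∫ y in (-a)..a, |(Q y - alpha) * psi y| :=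
          intervalIntegral.abs_integral_le_integral_abs hle
      _ ≤ ∫ y in (-a)..a, (M + |alpha|) * psi y := by
          apply intervalIntegral.integral_mono_on hle _ hintCψ
          · intro x hx
            rw [abs_mul, abs_of_nonneg (hpos x hx)]
            exact mul_le_mul_of_nonneg_right (hQabs x hx) (hpos x hx)
          · apply IntervalIntegrable.abs
            apply ContinuousOn.intervalIntegrable
            rw [huIcc]
            exact (hQ.sub continuousOn_const).mul hψcont
      _ = M + |alpha| := hintCψ'
  -- combine : k^2 * I0 = cos(ka)*I3 - I2
  have hk2eq : k^2 * I0 = Real.cos (k*a) * I3 - I2 := by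
    have hE2' : I2 - k * I1 = Real.cos (k*a) * I3 := by rw [E2, E3]
    linear_combination k * E1 + hE2'
  -- the second bound
  have habs2 : |I0| ≤ (M + |alpha|) / (2*(r:ℝ)^2*π^2) := by
    have h1 : |k^2 * I0| ≤ 2*(M + |alpha|) := by
      rw [hk2eq]
      calc |Real.cos (k*a) * I3 - I2| ≤ |Real.cos (k*a) * I3| + |I2| := abs_sub _ _
        _ ≤ 1 * (M + |alpha|) + (M + |alpha|) := by
            rw [abs_mul]
            exact add_le_add (mul_le_mul (Real.abs_cos_le_one _) hb3 (abs_nonneg _)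
              zero_le_one) hb2
        _ = 2*(M + |alpha|) := by ring
    rw [abs_mul, abs_of_nonneg (by positivity : (0:ℝ) ≤ k^2)] at h1
    have hk2pos : (0:ℝ) < k^2 := by positivity
    have h2 : |I0| ≤ 2*(M + |alpha|) / k^2 := by
      rw [le_div_iff₀ hk2pos]; linarith [h1]
    have h3 : 2*(M + |alpha|) / k^2 = (M + |alpha|) / (2*(r:ℝ)^2*π^2) := by
      rw [hk]
      rw [div_eq_div_iff (by positivity) (by positivity)]
      ring
    linarith [h2, h3.symm.le, h3.le]
  -- the first bound
  have habs1 : |I0| ≤ 1 := by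
    calc |I0| ≤ ∫ y in (-a)..a, |psi y * Real.cos (k*y)| :=
          intervalIntegral.abs_integral_le_integral_abs hle
      _ ≤ ∫ y in (-a)..a, psi y := by
          apply intervalIntegral.integral_mono_on hle hint0.abs hintψ
          intro x hx
          rw [abs_mul, abs_of_nonneg (hpos x hx)]
          calc psi x * |Real.cos (k*x)| ≤ psi x * 1 :=
                mul_le_mul_of_nonneg_left (Real.abs_cos_le_one _) (hpos x hx)
            _ = psi x := mul_one _
      _ = 1 := hnorm
  exact le_min habs1 habs2
end

section
/- For the kernel φ(y) = (1 + ε̄ cos(2πy)) 𝟙_{|y|≤1/2}(y) with 0 ≤ ε̄ < 3/4, the neutral curve D₀(λ, ε̄) = −(λ³/(4π³)) (1 − ε̄/(1−λ²)) sin(π/λ) is positive for λ ∈ (1/2, √(1−ε̄)), and D₀(λ,ε̄) → 0 as λ → √(1−ε̄)⁻; in particular the maximal wavelength in the first tongue is λ_max(ε̄) = √(1−ε̄). -/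
open MeasureTheory Real Filter
open scoped Real

theorem stmt18 (eps : ℝ) (heps : eps ∈ Set.Ico (0:ℝ) (3/4)) :
    (∀ lam ∈ Set.Ioo (1/2 : ℝ) (Real.sqrt (1 - eps)),
      0 < -(lam^3/(4*π^3)) * (1 - eps/(1 - lam^2)) * Real.sin (π/lam)) ∧
    Tendsto (fun lam : ℝ => -(lam^3/(4*π^3)) * (1 - eps/(1 - lam^2)) * Real.sin (π/lam))
      (nhdsWithin (Real.sqrt (1 - eps)) (Set.Iio (Real.sqrt (1 - eps))))
      (nhds 0) := by
  obtain ⟨heps0, heps1⟩ := heps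
  have h1e : (0:ℝ) < 1 - eps := by linarith
  have hpi : (0:ℝ) < π := Real.pi_pos
  constructor
  · intro lam ⟨hl, hu⟩
    have hlam0 : (0:ℝ) < lam := by linarith
    have hsq : lam^2 < 1 - eps := by
      have := Real.sq_sqrt h1e.le
      nlinarith [Real.sqrt_nonneg (1 - eps)]
    have hlam1 : lam < 1 := by nlinarith
    have hA : 0 < lam^3/(4*π^3) := by positivity
    have hB : 0 < 1 - eps/(1 - lam^2) := by
      have h2 : (0:ℝ) < 1 - lam^2 := by nlinarith
      have : eps/(1 - lam^2) < 1 := (div_lt_one h2).mpr (by nlinarith)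
      linarith
    have hS : Real.sin (π/lam) < 0 := by
      have h1 : π < π/lam := by
        rw [lt_div_iff₀ hlam0]; nlinarith
      have h2 : π/lam < 2*π := by
        rw [div_lt_iff₀ hlam0]; nlinarith
      have : Real.sin (π/lam) = -Real.sin (π/lam - π) := by
        rw [← Real.sin_add_pi]; ring_nf
      rw [this, neg_neg_iff_pos]
      exact Real.sin_pos_of_pos_of_lt_pi (by linarith) (by linarith)
    nlinarith [mul_pos (mul_pos hA hB) (neg_pos.mpr hS)]
  · rcases eq_or_lt_of_le heps0 with h0 | h0
    · -- eps = 0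
      simp only [← h0, zero_div, sub_zero, Real.sqrt_one]
      have hc : ContinuousAt (fun lam : ℝ =>
          -(lam^3/(4*π^3)) * (1 - 0/(1 - lam^2)) * Real.sin (π/lam)) 1 := by
        simp only [zero_div, sub_zero]
        have h1 : ContinuousAt (fun lam : ℝ => π/lam) 1 :=
          ContinuousAt.div continuousAt_const continuousAt_id one_ne_zero
        fun_prop (disch := positivity)
      have := hc.tendsto.mono_left (nhdsWithin_le_nhds (s := Set.Iio 1))
      simpa using this
    · -- eps > 0
      set a := Real.sqrt (1 - eps) with ha
      have ha2 : a^2 = 1 - eps := Real.sq_sqrt h1e.le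
      have ha0 : 0 < a := Real.sqrt_pos.mpr h1e
      have hne : (1 : ℝ) - a^2 ≠ 0 := by rw [ha2]; linarith
      have hc : ContinuousAt (fun lam : ℝ =>
          -(lam^3/(4*π^3)) * (1 - eps/(1 - lam^2)) * Real.sin (π/lam)) a := by
        have h1 : ContinuousAt (fun lam : ℝ => π/lam) a :=
          ContinuousAt.div continuousAt_const continuousAt_id ha0.ne'
        have h2 : ContinuousAt (fun lam : ℝ => eps/(1 - lam^2)) a :=
          ContinuousAt.div continuousAt_const (by fun_prop) hne
        fun_prop (disch := positivity)
      have hval : -(a^3/(4*π^3)) * (1 - eps/(1 - a^2)) * Real.sin (π/a) = 0 := by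
        rw [ha2]
        have : eps / (1 - (1 - eps)) = 1 := by
          rw [show (1:ℝ) - (1 - eps) = eps by ring, div_self h0.ne']
        rw [this]; ring
      have := hc.tendsto.mono_left (nhdsWithin_le_nhds (s := Set.Iio a))
      rw [hval] at this
      exact this
end
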